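/- For every pivot (v, i) ∈ [1,m] × [1,n], the following recurrence holds: R(v,i) = ∞ if mfi(v,i) = [-∞,∞]; R(v,i) = i if mfi(v,i) ≠ [-∞,∞] and v has no right child in CT(P); and otherwise (mfi(v,i) ≠ [-∞,∞] and v.R ≠ nil) R(v,i) = min{ R(v.R, j) : i+1 ≤ j ≤ n, T[i] < T[j], i < L(v.R, j) }. -/

import Mathlib

/-- Ordered binary trees (possibly empty). -/
inductive BTree : Type
  | nil : BTree
  | node : BTree → BTree → BTree
  deriving DecidableEq

/-- The minimum value of a list of integers (with default `0` for the empty list). -/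
def minval (l : List ℤ) : ℤ := (@List.minimum ℤ Int.instLinearOrder.toPartialOrder.toPreorder _ l).untopD 0

/-- The 0-based index of the leftmost occurrence of the minimum value. -/
def minidx0 (l : List ℤ) : ℕ := l.idxOf (minval l)

theorem minidx0_lt_length {l : List ℤ} (h : l ≠ []) : minidx0 l < l.length := by
  obtain ⟨a, ha⟩ := WithTop.ne_top_iff_exists.mp (List.minimum_ne_top_of_ne_nil h)
  have hmem : a ∈ l := List.minimum_mem ha.symm
  have hval : minval l = a := by simp [minval, ← ha]
  rw [minidx0, hval]
  exact List.idxOf_lt_length_iff.mpr hmem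

/-- The Cartesian tree of a string of integers. -/
def CT (l : List ℤ) : BTree :=
  if h : l = [] then .nil
  else .node (CT (l.take (minidx0 l))) (CT (l.drop (minidx0 l + 1)))
termination_by l.length
decreasing_by
  · have := minidx0_lt_length h
    simp [List.length_take]
    omega
  · have : 0 < l.length := List.length_pos_iff.mpr h
    simp [List.length_drop]
    omega

/-- The value of the 1-based position `i` of the string `T` (default `0`). -/
def val (T : List ℤ) (i : ℕ) : ℤ := T.getD (i - 1) 0

/-- `IsSubSeq n m I` : `I` is a strictly increasing sequence of `m` subscripts in `[1, n]`. -/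
def IsSubSeq (n m : ℕ) (I : List ℕ) : Prop :=
  I.length = m ∧ I.Pairwise (· < ·) ∧ ∀ j ∈ I, 1 ≤ j ∧ j ≤ n

/-- The subsequence `T_I` of `T` selected by the (1-based) subscript sequence `I`. -/
def seqAt (T : List ℤ) (I : List ℕ) : List ℤ := I.map (val T)

/-- The substring `P[a..b]` of `P` (1-based, inclusive). -/
def subslice (P : List ℤ) (a b : ℕ) : List ℤ := (P.take b).drop (a - 1)

/-- The left end of the maximal interval around position `v` in which `P[v]` is minimal:
one plus the rightmost position `j < v` carrying a value smaller than `P[v]` (or `1`). -/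
def leftEnd (P : List ℤ) (v : ℕ) : ℕ :=
  (((Finset.Icc 1 (v - 1)).filter (fun j => val P j < val P v)).max.unbotD 0) + 1

/-- The right end of the maximal interval around position `v` in which `P[v]` is minimal:
the leftmost position `j > v` carrying a value smaller than `P[v]`, minus one (or `|P|`). -/
def rightEnd (P : List ℤ) (v : ℕ) : ℕ :=
  (((Finset.Icc (v + 1) P.length).filter (fun j => val P j < val P v)).min.untopD
    (P.length + 1)) - 1

/-- `P_v`: the substring of `P` spanned by the subtree of `CT(P)` rooted at node `v`
(nodes are identified with 1-based positions of `P`). -/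
def Psub (P : List ℤ) (v : ℕ) : List ℤ := subslice P (leftEnd P v) (rightEnd P v)

/-- The left child `v.L` of node `v` in `CT(P)` (as a 1-based position), if it exists. -/
def leftChild (P : List ℤ) (v : ℕ) : Option ℕ :=
  if leftEnd P v < v then some (leftEnd P v + minidx0 (subslice P (leftEnd P v) (v - 1)))
  else none

/-- The right child `v.R` of node `v` in `CT(P)` (as a 1-based position), if it exists. -/
def rightChild (P : List ℤ) (v : ℕ) : Option ℕ :=
  if v < rightEnd P v then some (v + 1 + minidx0 (subslice P (v + 1) (rightEnd P v)))
  else none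

/-- `[ℓ, r]` is a fixed-interval with pivot `(v, i)`. -/
def IsFixedInterval (T P : List ℤ) (v i ℓ r : ℕ) : Prop :=
  1 ≤ ℓ ∧ r ≤ T.length ∧
    ∃ I : List ℕ, IsSubSeq T.length (Psub P v).length I ∧ i ∈ I ∧
      (∀ j ∈ I, ℓ ≤ j ∧ j ≤ r) ∧ CT (seqAt T I) = CT (Psub P v) ∧
      val T i = minval (seqAt T I)

/-- `IntervalSsubset (ℓ', r') (ℓ, r)` : the interval `[ℓ', r']` is strictly contained
in the interval `[ℓ, r]`. -/
def IntervalSsubset (p q : ℕ × ℕ) : Prop := q.1 ≤ p.1 ∧ p.2 ≤ q.2 ∧ p ≠ q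

/-- `[ℓ, r]` is a minimal fixed-interval with pivot `(v, i)`. -/
def IsMinFixedInterval (T P : List ℤ) (v i ℓ r : ℕ) : Prop :=
  IsFixedInterval T P v i ℓ r ∧
    ¬∃ ℓ' r', IsFixedInterval T P v i ℓ' r' ∧ IntervalSsubset (ℓ', r') (ℓ, r)

open Classical in
/-- The left endpoint `L(v, i)` of the minimal fixed-interval `mfi(v, i)`,
which is `-∞` (i.e. `⊥`) if no (minimal) fixed-interval with pivot `(v, i)` exists. -/
noncomputable def mfiL (T P : List ℤ) (v i : ℕ) : WithBot ℕ :=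
  if h : ∃ ℓ r, IsMinFixedInterval T P v i ℓ r then (h.choose : WithBot ℕ) else ⊥

open Classical in
/-- The right endpoint `R(v, i)` of the minimal fixed-interval `mfi(v, i)`,
which is `∞` (i.e. `⊤`) if no (minimal) fixed-interval with pivot `(v, i)` exists. -/
noncomputable def mfiR (T P : List ℤ) (v i : ℕ) : WithTop ℕ :=
  if h : ∃ ℓ r, IsMinFixedInterval T P v i ℓ r then (h.choose_spec.choose : WithTop ℕ) else ⊤

/-- `I` is a trace of pattern `P` in text `T`. -/
def IsTrace (T P : List ℤ) (I : List ℕ) : Prop :=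
  IsSubSeq T.length P.length I ∧ CT (seqAt T I) = CT P

/-- `[ℓ, r]` is an occurrence interval for `P` over `T`. -/
def IsOccInterval (T P : List ℤ) (ℓ r : ℕ) : Prop :=
  1 ≤ ℓ ∧ r ≤ T.length ∧ ∃ I, IsTrace T P I ∧ ∀ j ∈ I, ℓ ≤ j ∧ j ≤ r

/-- `[ℓ, r]` is a minimal occurrence interval for `P` over `T`. -/
def IsMinOccInterval (T P : List ℤ) (ℓ r : ℕ) : Prop :=
  IsOccInterval T P ℓ r ∧
    ¬∃ ℓ' r', IsOccInterval T P ℓ' r' ∧ IntervalSsubset (ℓ', r') (ℓ, r)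


section Aux

lemma CT_of_ne_nil {l : List ℤ} (h : l ≠ []) :
    CT l = .node (CT (l.take (minidx0 l))) (CT (l.drop (minidx0 l + 1))) := by
  rw [CT, dif_neg h]

lemma CT_eq_nil_iff {l : List ℤ} : CT l = .nil ↔ l = [] := by
  constructor
  · intro h
    by_contra hl
    rw [CT_of_ne_nil hl] at h
    exact BTree.noConfusion h
  · rintro rfl; rw [CT]; simp

def btsize : BTree → ℕ
  | .nil => 0
  | .node a b => btsize a + btsize b + 1

lemma btsize_CT (l : List ℤ) : btsize (CT l) = l.length := by
  by_cases h : l = []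
  · subst h; rw [CT]; simp [btsize]
  · rw [CT_of_ne_nil h]
    have h1 := btsize_CT (l.take (minidx0 l))
    have h2 := btsize_CT (l.drop (minidx0 l + 1))
    have h3 := minidx0_lt_length h
    simp only [btsize, h1, h2, List.length_take, List.length_drop]
    omega
termination_by l.length
decreasing_by
  · have := minidx0_lt_length h
    simp [List.length_take]
    omega
  · have : 0 < l.length := List.length_pos_iff.mpr h
    simp [List.length_drop]
    omega

lemma length_eq_of_CT_eq {l l' : List ℤ} (h : CT l = CT l') : l.length = l'.length := by
  rw [← btsize_CT l, ← btsize_CT l', h]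

lemma minval_mem {l : List ℤ} (h : l ≠ []) : minval l ∈ l := by
  obtain ⟨a, ha⟩ := WithTop.ne_top_iff_exists.mp (List.minimum_ne_top_of_ne_nil h)
  have hv : minval l = a := by simp [minval, ← ha]
  rw [hv]; exact List.minimum_mem ha.symm

lemma minval_le {l : List ℤ} {a : ℤ} (h : l ≠ []) (ha : a ∈ l) : minval l ≤ a := by
  obtain ⟨m, hm⟩ := WithTop.ne_top_iff_exists.mp (List.minimum_ne_top_of_ne_nil h)
  have h1 : minval l = m := by simp [minval, ← hm]
  have h2 := List.minimum_le_of_mem' ha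
  rw [← hm] at h2
  rw [h1]; exact_mod_cast h2

lemma getElem_minidx0 {l : List ℤ} (h : l ≠ []) :
    l[minidx0 l]'(minidx0_lt_length h) = minval l :=
  List.getElem_idxOf (List.idxOf_lt_length_iff.mpr (minval_mem h))

lemma minidx0_eq_of_CT_eq {l l' : List ℤ} (hl : l ≠ []) (h : CT l = CT l') :
    minidx0 l = minidx0 l' := by
  have hl' : l' ≠ [] := by
    intro e
    rw [e, CT_eq_nil_iff.mpr rfl, CT_eq_nil_iff] at h
    exact hl h
  have hlen := length_eq_of_CT_eq h
  rw [CT_of_ne_nil hl, CT_of_ne_nil hl'] at h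
  injection h with h1 h2
  have := length_eq_of_CT_eq h1
  have m1 := minidx0_lt_length hl
  have m2 := minidx0_lt_length hl'
  simp only [List.length_take] at this
  omega

lemma minval_append_cons {X Y : List ℤ} {a : ℤ} (h : ∀ x ∈ X ++ Y, a < x) :
    minval (X ++ a :: Y) = a := by
  have hm : (X ++ a :: Y).minimum = (a : WithTop ℤ) := by
    rw [List.minimum_eq_coe_iff]
    refine ⟨by simp, ?_⟩
    intro b hb
    rcases List.mem_append.mp hb with h1 | h2
    · exact le_of_lt (h b (List.mem_append_left _ h1))
    · rcases List.mem_cons.mp h2 with rfl | h3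
      · exact le_refl _
      · exact le_of_lt (h b (List.mem_append_right _ h3))
  simp [minval, hm]

lemma CT_append_cons {X Y : List ℤ} {a : ℤ} (h : ∀ x ∈ X ++ Y, a < x) :
    minval (X ++ a :: Y) = a ∧ minidx0 (X ++ a :: Y) = X.length ∧
      CT (X ++ a :: Y) = .node (CT X) (CT Y) := by
  have hmv := minval_append_cons h
  have hna : a ∉ X := fun hmem => absurd rfl (ne_of_gt (h a (List.mem_append_left _ hmem)))
  have hidx : minidx0 (X ++ a :: Y) = X.length := by
    rw [minidx0, hmv, List.idxOf_append_of_notMem hna, List.idxOf_cons_self]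
    omega
  refine ⟨hmv, hidx, ?_⟩
  rw [CT_of_ne_nil (by simp), hidx]
  have ht : (X ++ a :: Y).take X.length = X := List.take_left
  have hd : (X ++ a :: Y).drop (X.length + 1) = Y := by
    have : X ++ a :: Y = (X ++ [a]) ++ Y := by simp
    rw [this]
    have hl : (X ++ [a]).length = X.length + 1 := by simp
    rw [← hl, List.drop_left]
  rw [ht, hd]

end Aux
section Aux2

lemma val_eq_getElem {T : List ℤ} {j : ℕ} (h1 : 1 ≤ j) (h2 : j ≤ T.length) :
    val T j = T[j-1]'(by omega) := List.getD_eq_getElem _ _ (by omega)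

lemma val_injOn {T : List ℤ} (hT : T.Nodup) {a b : ℕ} (ha1 : 1 ≤ a) (ha2 : a ≤ T.length)
    (hb1 : 1 ≤ b) (hb2 : b ≤ T.length) (h : val T a = val T b) : a = b := by
  rw [val_eq_getElem ha1 ha2, val_eq_getElem hb1 hb2] at h
  have := (List.Nodup.getElem_inj_iff hT).mp h
  omega

lemma length_seqAt (T : List ℤ) (I : List ℕ) : (seqAt T I).length = I.length := by
  simp [seqAt]

lemma getElem_seqAt (T : List ℤ) {I : List ℕ} {p : ℕ} (hp : p < I.length) :
    (seqAt T I)[p]'(by rw [length_seqAt]; exact hp) = val T (I[p]) := by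
  simp [seqAt]

lemma subslice_length {P : List ℤ} {a b : ℕ} (h1 : 1 ≤ a) (h2 : b ≤ P.length) :
    (subslice P a b).length = b + 1 - a := by
  simp only [subslice, List.length_drop, List.length_take]
  omega

lemma subslice_getElem {P : List ℤ} {a b p : ℕ} (h1 : 1 ≤ a) (h2 : b ≤ P.length)
    (hp : p < (subslice P a b).length) :
    (subslice P a b)[p] = val P (a + p) := by
  have hlen := subslice_length (P := P) h1 h2
  have hp' : p < b + 1 - a := by rw [← hlen]; exact hp
  simp only [subslice]
  rw [List.getElem_drop, List.getElem_take, val_eq_getElem (by omega) (by omega)]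
  congr 1
  omega

lemma mem_subslice {P : List ℤ} {a b : ℕ} {x : ℤ} (h1 : 1 ≤ a) (h2 : b ≤ P.length)
    (hx : x ∈ subslice P a b) : ∃ j, a ≤ j ∧ j ≤ b ∧ x = val P j := by
  obtain ⟨p, hp, he⟩ := List.mem_iff_getElem.mp hx
  have hlen := subslice_length (P := P) h1 h2
  refine ⟨a + p, by omega, by omega, ?_⟩
  rw [← he, subslice_getElem h1 h2 hp]

lemma subslice_split {P : List ℤ} {a v b : ℕ} (h1 : 1 ≤ a) (hav : a ≤ v) (hvb : v ≤ b)
    (hb : b ≤ P.length) :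
    subslice P a b = subslice P a (v-1) ++ val P v :: subslice P (v+1) b := by
  have hv1 : v - 1 < (P.take b).length := by
    simp [List.length_take]; omega
  have hTb : P.take b = (P.take b).take (v-1) ++ (P.take b)[v-1] :: (P.take b).drop v := by
    conv_lhs => rw [← List.take_append_drop (v-1) (P.take b)]
    congr 1
    have h' : v - 1 + 1 = v := by omega
    rw [List.drop_eq_getElem_cons hv1, h']
  have hget : (P.take b)[v-1] = val P v := by
    rw [List.getElem_take, val_eq_getElem (by omega) (by omega)]
  have htt : (P.take b).take (v-1) = P.take (v-1) := by
    rw [List.take_take]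
    congr 1
    omega
  have hts : (P.take b).drop v = subslice P (v+1) b := by
    simp [subslice]
  rw [subslice, hTb, hget, htt, hts]
  rw [List.drop_append_of_le_length (by simp [List.length_take]; omega)]
  rfl

end Aux2
section Aux3

lemma leftEnd_pos (P : List ℤ) (v : ℕ) : 1 ≤ leftEnd P v := Nat.le_add_left 1 _

lemma leftEnd_le {P : List ℤ} {v : ℕ} (hv1 : 1 ≤ v) : leftEnd P v ≤ v := by
  rw [leftEnd]
  cases hF : ((Finset.Icc 1 (v-1)).filter (fun j => val P j < val P v)).max with
  | bot => simp [hF, WithBot.unbotD]; omega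
  | coe m =>
    have hm := Finset.mem_of_max hF
    simp only [Finset.mem_filter, Finset.mem_Icc] at hm
    simp only [hF, WithBot.unbotD_coe]
    omega

lemma le_rightEnd {P : List ℤ} {v : ℕ} (hv2 : v ≤ P.length) : v ≤ rightEnd P v := by
  rw [rightEnd]
  cases hF : ((Finset.Icc (v+1) P.length).filter (fun j => val P j < val P v)).min with
  | top => simp [hF, WithTop.untopD]; omega
  | coe m =>
    have hm := Finset.mem_of_min hF
    simp only [Finset.mem_filter, Finset.mem_Icc] at hm
    simp only [hF, WithTop.untopD_coe]
    omega

lemma rightEnd_le (P : List ℤ) (v : ℕ) : rightEnd P v ≤ P.length := by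
  rw [rightEnd]
  cases hF : ((Finset.Icc (v+1) P.length).filter (fun j => val P j < val P v)).min with
  | top => simp [hF, WithTop.untopD]
  | coe m =>
    have hm := Finset.mem_of_min hF
    simp only [Finset.mem_filter, Finset.mem_Icc] at hm
    simp only [hF, WithTop.untopD_coe]
    omega

lemma lt_leftEnd_of_lt {P : List ℤ} {v j : ℕ} (hj1 : 1 ≤ j) (hj2 : j < v)
    (h : val P j < val P v) : j < leftEnd P v := by
  have hjf : j ∈ (Finset.Icc 1 (v-1)).filter (fun j => val P j < val P v) := by
    simp only [Finset.mem_filter, Finset.mem_Icc]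
    exact ⟨⟨hj1, by omega⟩, h⟩
  have hle := Finset.le_max hjf
  rw [leftEnd]
  cases hF : ((Finset.Icc 1 (v-1)).filter (fun j => val P j < val P v)).max with
  | bot => rw [hF] at hle; exact absurd hle (by simp)
  | coe m =>
    rw [hF] at hle
    have : j ≤ m := WithBot.coe_le_coe.mp hle
    simp only [WithBot.unbotD_coe]
    omega

lemma rightEnd_lt_of_gt {P : List ℤ} {v j : ℕ} (hj1 : v < j) (hj2 : j ≤ P.length)
    (h : val P j < val P v) : rightEnd P v < j := by
  have hjf : j ∈ (Finset.Icc (v+1) P.length).filter (fun j => val P j < val P v) := by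
    simp only [Finset.mem_filter, Finset.mem_Icc]
    exact ⟨⟨by omega, hj2⟩, h⟩
  have hle := Finset.min_le hjf
  rw [rightEnd]
  cases hF : ((Finset.Icc (v+1) P.length).filter (fun j => val P j < val P v)).min with
  | top => rw [hF] at hle; exact absurd hle (by simp)
  | coe m =>
    rw [hF] at hle
    have hm := Finset.mem_of_min hF
    simp only [Finset.mem_filter, Finset.mem_Icc] at hm
    have : m ≤ j := WithTop.coe_le_coe.mp hle
    simp only [WithTop.untopD_coe]
    omega

lemma val_lt_of_mem_interval {P : List ℤ} (hP : P.Nodup) {v : ℕ} (hv1 : 1 ≤ v)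
    (hv2 : v ≤ P.length) {j : ℕ} (hj1 : leftEnd P v ≤ j) (hj2 : j ≤ rightEnd P v)
    (hne : j ≠ v) : val P v < val P j := by
  have hj1' : 1 ≤ j := le_trans (leftEnd_pos P v) hj1
  have hj2' : j ≤ P.length := le_trans hj2 (rightEnd_le P v)
  have hne' : val P j ≠ val P v := fun h => hne (val_injOn hP hj1' hj2' hv1 hv2 h)
  by_contra hcon
  push_neg at hcon
  have hlt : val P j < val P v := lt_of_le_of_ne hcon hne'
  rcases lt_or_gt_of_ne hne with h | h
  · exact absurd (lt_leftEnd_of_lt hj1' h hlt) (by omega)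
  · exact absurd (rightEnd_lt_of_gt h hj2' hlt) (by omega)

lemma val_rightEnd_succ {P : List ℤ} {v : ℕ} (hv2 : v ≤ P.length)
    (h : rightEnd P v < P.length) :
    val P (rightEnd P v + 1) < val P v ∧ v + 1 ≤ rightEnd P v + 1 := by
  rw [rightEnd] at h ⊢
  cases hF : ((Finset.Icc (v+1) P.length).filter (fun j => val P j < val P v)).min with
  | top =>
    rw [hF, WithTop.untopD_top] at h
    omega
  | coe m =>
    rw [hF] at h
    have hm := Finset.mem_of_min hF
    simp only [Finset.mem_filter, Finset.mem_Icc] at hm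
    simp only [WithTop.untopD_coe] at h ⊢
    have hmv : m - 1 + 1 = m := by omega
    rw [hmv]
    exact ⟨hm.2, by omega⟩

end Aux3
section Aux4

lemma Psub_decomp {P : List ℤ} (hP : P.Nodup) {v : ℕ} (hv1 : 1 ≤ v) (hv2 : v ≤ P.length) :
    CT (Psub P v) = .node (CT (subslice P (leftEnd P v) (v-1)))
        (CT (subslice P (v+1) (rightEnd P v)))
    ∧ minidx0 (Psub P v) = v - leftEnd P v
    ∧ minval (Psub P v) = val P v
    ∧ (Psub P v).length = rightEnd P v + 1 - leftEnd P v := by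
  have hle := leftEnd_le (P := P) hv1
  have hre := le_rightEnd (P := P) hv2
  have hre' := rightEnd_le P v
  have hlp := leftEnd_pos P v
  have hsplit := subslice_split (P := P) hlp hle hre hre'
  have hlt : ∀ x ∈ subslice P (leftEnd P v) (v-1) ++ subslice P (v+1) (rightEnd P v),
      val P v < x := by
    intro x hx
    rcases List.mem_append.mp hx with h | h
    · obtain ⟨j, hj1, hj2, rfl⟩ := mem_subslice hlp (by omega) h
      exact val_lt_of_mem_interval hP hv1 hv2 hj1 (by omega) (by omega)
    · obtain ⟨j, hj1, hj2, rfl⟩ := mem_subslice (by omega) hre' h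
      exact val_lt_of_mem_interval hP hv1 hv2 (by omega) hj2 (by omega)
  obtain ⟨h1, h2, h3⟩ := CT_append_cons hlt
  have hXlen : (subslice P (leftEnd P v) (v-1)).length = v - leftEnd P v := by
    rw [subslice_length hlp (by omega)]; omega
  rw [Psub, hsplit]
  refine ⟨h3, by rw [h2, hXlen], h1, ?_⟩
  rw [← hsplit, subslice_length hlp hre']

lemma rightChild_none {P : List ℤ} {v : ℕ} (hv2 : v ≤ P.length)
    (h : rightChild P v = none) : rightEnd P v = v := by
  rw [rightChild] at h
  by_cases hvr : v < rightEnd P v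
  · rw [if_pos hvr] at h; exact absurd h (by simp)
  · have := le_rightEnd (P := P) hv2; omega

lemma rightChild_spec {P : List ℤ} (hP : P.Nodup) {v : ℕ} (hv1 : 1 ≤ v) (hv2 : v ≤ P.length)
    {u : ℕ} (h : rightChild P v = some u) :
    v < u ∧ u ≤ rightEnd P v ∧ leftEnd P u = v + 1 ∧ rightEnd P u = rightEnd P v ∧
    Psub P u = subslice P (v+1) (rightEnd P v) ∧ u ≤ P.length := by
  rw [rightChild] at h
  by_cases hvr : v < rightEnd P v
  swap
  · rw [if_neg hvr] at h; exact absurd h (by simp)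
  rw [if_pos hvr] at h
  have hu : u = v + 1 + minidx0 (subslice P (v+1) (rightEnd P v)) := (Option.some_inj.mp h).symm
  set re := rightEnd P v with hre_def
  have hre' : re ≤ P.length := rightEnd_le P v
  set W := subslice P (v+1) re with hW_def
  have hWlen : W.length = re - v := by rw [hW_def, subslice_length (by omega) hre']; omega
  have hWne : W ≠ [] := by
    intro e; rw [e] at hWlen; simp at hWlen; omega
  have hk := minidx0_lt_length hWne
  have huv : v < u := by omega
  have hure : u ≤ re := by omega
  have hu_len : u ≤ P.length := by omega
  have hvalu : val P u = minval W := by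
    have h0 := getElem_minidx0 hWne
    rw [hu, ← h0]
    exact (subslice_getElem (by omega) hre' (by exact hk)).symm
  have hmin_u : ∀ j, v + 1 ≤ j → j ≤ re → j ≠ u → val P u < val P j := by
    intro j hj1 hj2 hju
    have hjW : val P j ∈ W := by
      rw [hW_def]
      rw [List.mem_iff_getElem]
      refine ⟨j - (v+1), by rw [← hW_def, hWlen]; omega, ?_⟩
      rw [subslice_getElem (by omega) hre' (by rw [← hW_def, hWlen]; omega)]
      congr 1; omega
    have hle := minval_le hWne hjW
    rw [← hvalu] at hle
    exact lt_of_le_of_ne hle (fun e => hju (val_injOn hP (by omega) hu_len (by omega) (by omega) e).symm)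
  have hvu : val P v < val P u :=
    val_lt_of_mem_interval hP hv1 hv2 (by have := leftEnd_le (P := P) hv1; omega)
      hure (by omega)
  have hvmem : v ∈ (Finset.Icc 1 (u-1)).filter (fun j => val P j < val P u) := by
    simp only [Finset.mem_filter, Finset.mem_Icc]
    exact ⟨⟨hv1, by omega⟩, hvu⟩
  have hleft : leftEnd P u = v + 1 := by
    rw [leftEnd]
    cases hF : ((Finset.Icc 1 (u-1)).filter (fun j => val P j < val P u)).max with
    | bot =>
      rw [Finset.max_eq_bot] at hF
      rw [hF] at hvmem
      exact absurd hvmem (Finset.notMem_empty v)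
    | coe m =>
      have hm := Finset.mem_of_max hF
      simp only [Finset.mem_filter, Finset.mem_Icc] at hm
      have hmv : m ≤ v := by
        by_contra hc
        push_neg at hc
        exact absurd hm.2 (not_lt.mpr (le_of_lt (hmin_u m (by omega) (by omega) (by omega))))
      have hvm : v ≤ m := by
        have := Finset.le_max hvmem
        rw [hF] at this
        exact WithBot.coe_le_coe.mp this
      simp only [WithBot.unbotD_coe]
      omega
  have hG : ∀ j ∈ (Finset.Icc (u+1) P.length).filter (fun j => val P j < val P u), re < j := by
    intro j hj
    simp only [Finset.mem_filter, Finset.mem_Icc] at hj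
    by_contra hc
    exact absurd hj.2 (not_lt.mpr (le_of_lt (hmin_u j (by omega) (by omega) (by omega))))
  have hright : rightEnd P u = re := by
    rw [rightEnd]
    cases hF : ((Finset.Icc (u+1) P.length).filter (fun j => val P j < val P u)).min with
    | top =>
      rw [Finset.min_eq_top] at hF
      by_cases hrelen : re < P.length
      · obtain ⟨hval, _⟩ := val_rightEnd_succ (P := P) hv2 hrelen
        rw [← hre_def] at hval
        have hmem : re + 1 ∈ (Finset.Icc (u+1) P.length).filter (fun j => val P j < val P u) := by
          simp only [Finset.mem_filter, Finset.mem_Icc]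
          exact ⟨⟨by omega, by omega⟩, lt_trans hval hvu⟩
        rw [hF] at hmem
        exact absurd hmem (Finset.notMem_empty _)
      · rw [WithTop.untopD_top]
        omega
    | coe m =>
      have hm := Finset.mem_of_min hF
      have hrem := hG m hm
      simp only [Finset.mem_filter, Finset.mem_Icc] at hm
      by_cases hrelen : re < P.length
      · obtain ⟨hval, _⟩ := val_rightEnd_succ (P := P) hv2 hrelen
        rw [← hre_def] at hval
        have hmem : re + 1 ∈ (Finset.Icc (u+1) P.length).filter (fun j => val P j < val P u) := by
          simp only [Finset.mem_filter, Finset.mem_Icc]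
          exact ⟨⟨by omega, by omega⟩, lt_trans hval hvu⟩
        have hle := Finset.min_le hmem
        rw [hF] at hle
        have : m ≤ re + 1 := WithTop.coe_le_coe.mp hle
        simp only [WithTop.untopD_coe]
        omega
      · omega
  exact ⟨huv, hure, hleft, hright, by rw [Psub, hleft, hright], hu_len⟩

end Aux4
section Aux5

lemma fixed_bounds {T P : List ℤ} {v i ℓ r : ℕ} (h : IsFixedInterval T P v i ℓ r) :
    ℓ ≤ i ∧ i ≤ r ∧ 1 ≤ i ∧ i ≤ T.length ∧ 1 ≤ ℓ ∧ r ≤ T.length := by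
  obtain ⟨hℓ, hr, I, ⟨hlen, hsort, hbnd⟩, hiI, hIlr, hCT, hmv⟩ := h
  obtain ⟨h1, h2⟩ := hIlr i hiI
  obtain ⟨h3, h4⟩ := hbnd i hiI
  exact ⟨h1, h2, h3, h4, hℓ, hr⟩

lemma fixed_decomp {T P : List ℤ} (hT : T.Nodup) (hP : P.Nodup) {v : ℕ}
    (hv1 : 1 ≤ v) (hv2 : v ≤ P.length) {i ℓ r : ℕ} (h : IsFixedInterval T P v i ℓ r) :
    ∃ A B : List ℕ,
      A.Pairwise (· < ·) ∧ B.Pairwise (· < ·) ∧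
      (∀ a ∈ A, ℓ ≤ a ∧ a < i ∧ 1 ≤ a ∧ a ≤ T.length) ∧
      (∀ b ∈ B, i < b ∧ b ≤ r ∧ 1 ≤ b ∧ b ≤ T.length) ∧
      A.length = v - leftEnd P v ∧ B.length = rightEnd P v - v ∧
      CT (seqAt T A) = CT (subslice P (leftEnd P v) (v-1)) ∧
      CT (seqAt T B) = CT (subslice P (v+1) (rightEnd P v)) ∧
      (∀ j ∈ A ++ B, val T i < val T j) := by
  obtain ⟨hℓ, hr, I, ⟨hlen, hsort, hbnd⟩, hiI, hIlr, hCT, hmv⟩ := h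
  obtain ⟨hi1, hi2⟩ := hbnd i hiI
  have hle := leftEnd_le (P := P) hv1
  have hre := le_rightEnd (P := P) hv2
  have hPd := Psub_decomp hP hv1 hv2
  have hPlen := hPd.2.2.2
  have hIlen : I.length = rightEnd P v + 1 - leftEnd P v := by rw [hlen, hPlen]
  have hIne : I ≠ [] := by
    intro e; rw [e] at hIlen; simp at hIlen; omega
  have hSne : seqAt T I ≠ [] := by
    intro e
    have := length_seqAt T I
    rw [e] at this
    simp at this
    exact hIne (List.length_eq_zero_iff.mp this.symm)
  set k := minidx0 (seqAt T I) with hk_def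
  have hkP : k = v - leftEnd P v := by
    rw [hk_def, minidx0_eq_of_CT_eq hSne hCT, hPd.2.1]
  have hkl : k < I.length := by
    have := minidx0_lt_length hSne
    rw [length_seqAt] at this
    exact this
  have hstrict : ∀ j ∈ I, j ≠ i → val T i < val T j := by
    intro j hjI hji
    have hjle : val T j ∈ seqAt T I := List.mem_map_of_mem hjI
    have := minval_le hSne hjle
    rw [← hmv] at this
    obtain ⟨hj1, hj2⟩ := hbnd j hjI
    exact lt_of_le_of_ne this (fun e => hji (val_injOn hT hi1 hi2 hj1 hj2 e).symm)
  have hIk : I[k]'hkl = i := by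
    have h1 : (seqAt T I)[k]'(by rw [length_seqAt]; exact hkl) = val T (I[k]'hkl) :=
      getElem_seqAt T hkl
    have h2 : (seqAt T I)[k]'(by rw [length_seqAt]; exact hkl) = minval (seqAt T I) :=
      getElem_minidx0 hSne
    have h3 : val T (I[k]'hkl) = val T i := by rw [← h1, h2, hmv]
    obtain ⟨hj1, hj2⟩ := hbnd _ (List.getElem_mem hkl)
    exact val_injOn hT hj1 hj2 hi1 hi2 h3
  set A := I.take k with hA_def
  set B := I.drop (k+1) with hB_def
  have hIAB : A ++ i :: B = I := by
    rw [hA_def, hB_def, ← hIk, ← List.drop_eq_getElem_cons hkl, List.take_append_drop]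
  have hAsub : A.Sublist I := List.take_sublist _ _
  have hBsub : B.Sublist I := List.drop_sublist _ _
  have hAsort : A.Pairwise (· < ·) := List.Pairwise.sublist hAsub hsort
  have hBsort : B.Pairwise (· < ·) := List.Pairwise.sublist hBsub hsort
  have hAlen : A.length = k := by
    rw [hA_def, List.length_take]; omega
  have hBlen : B.length = I.length - (k+1) := by
    rw [hB_def, List.length_drop]
  have hpw := List.pairwise_iff_get.mp hsort
  have hAlt : ∀ a ∈ A, a < i := by
    intro a ha
    obtain ⟨p, hp, he⟩ := List.mem_iff_getElem.mp ha
    have hpk : p < k := by rw [hAlen] at hp; exact hp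
    have h' : A[p] = I[p]'(by omega) := List.getElem_take
    rw [← he, h', ← hIk]
    exact hpw ⟨p, by omega⟩ ⟨k, hkl⟩ (Fin.mk_lt_mk.mpr hpk)
  have hBgt : ∀ b ∈ B, i < b := by
    intro b hb
    obtain ⟨q, hq, he⟩ := List.mem_iff_getElem.mp hb
    have hq' : k + 1 + q < I.length := by
      rw [hBlen] at hq; omega
    have h' : B[q] = I[k+1+q]'hq' := List.getElem_drop
    rw [← he, h', ← hIk]
    exact hpw ⟨k, hkl⟩ ⟨k+1+q, hq'⟩ (Fin.mk_lt_mk.mpr (by omega))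
  have ht1 : (seqAt T I).take k = seqAt T A := by
    rw [hA_def, seqAt, seqAt, List.map_take]
  have ht2 : (seqAt T I).drop (k+1) = seqAt T B := by
    rw [hB_def, seqAt, seqAt, List.map_drop]
  have hCTI : CT (seqAt T I) = .node (CT (seqAt T A)) (CT (seqAt T B)) := by
    rw [CT_of_ne_nil hSne, ← hk_def, ht1, ht2]
  rw [hCTI, hPd.1] at hCT
  injection hCT with e1 e2
  refine ⟨A, B, hAsort, hBsort, ?_, ?_, by omega, by omega, e1, e2, ?_⟩
  · intro a ha
    have haI : a ∈ I := hAsub.subset ha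
    exact ⟨(hIlr a haI).1, hAlt a ha, (hbnd a haI).1, (hbnd a haI).2⟩
  · intro b hb
    have hbI : b ∈ I := hBsub.subset hb
    exact ⟨hBgt b hb, (hIlr b hbI).2, (hbnd b hbI).1, (hbnd b hbI).2⟩
  · intro j hj
    rcases List.mem_append.mp hj with hja | hjb
    · exact hstrict j (hAsub.subset hja) (by have := hAlt j hja; omega)
    · exact hstrict j (hBsub.subset hjb) (by have := hBgt j hjb; omega)

lemma fixed_glue {T P : List ℤ} (hP : P.Nodup) {v : ℕ}
    (hv1 : 1 ≤ v) (hv2 : v ≤ P.length) {i ℓ r : ℕ} {A B : List ℕ}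
    (hA : A.Pairwise (· < ·)) (hB : B.Pairwise (· < ·))
    (hAm : ∀ a ∈ A, ℓ ≤ a ∧ a < i ∧ 1 ≤ a ∧ a ≤ T.length)
    (hBm : ∀ b ∈ B, i < b ∧ b ≤ r ∧ 1 ≤ b ∧ b ≤ T.length)
    (hAl : A.length = v - leftEnd P v) (hBl : B.length = rightEnd P v - v)
    (hCA : CT (seqAt T A) = CT (subslice P (leftEnd P v) (v-1)))
    (hCB : CT (seqAt T B) = CT (subslice P (v+1) (rightEnd P v)))
    (hlt : ∀ j ∈ A ++ B, val T i < val T j)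
    (hℓi : ℓ ≤ i) (hir : i ≤ r) (hℓ : 1 ≤ ℓ) (hr : r ≤ T.length)
    (hin : i ≤ T.length) :
    IsFixedInterval T P v i ℓ r := by
  have hle := leftEnd_le (P := P) hv1
  have hre := le_rightEnd (P := P) hv2
  have hPd := Psub_decomp hP hv1 hv2
  have hseq : seqAt T (A ++ i :: B) = seqAt T A ++ val T i :: seqAt T B := by
    simp [seqAt]
  have hlt' : ∀ x ∈ seqAt T A ++ seqAt T B, val T i < x := by
    intro x hx
    rcases List.mem_append.mp hx with hxa | hxb
    · obtain ⟨j, hj, rfl⟩ := List.mem_map.mp hxa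
      exact hlt j (List.mem_append_left _ hj)
    · obtain ⟨j, hj, rfl⟩ := List.mem_map.mp hxb
      exact hlt j (List.mem_append_right _ hj)
  obtain ⟨hmv, hidx, hct⟩ := CT_append_cons hlt'
  refine ⟨hℓ, hr, A ++ i :: B, ⟨?_, ?_, ?_⟩, ?_, ?_, ?_, ?_⟩
  · simp only [List.length_append, List.length_cons]
    rw [hAl, hBl, hPd.2.2.2]
    omega
  · rw [List.pairwise_append]
    refine ⟨hA, ?_, ?_⟩
    · exact List.pairwise_cons.mpr ⟨fun b hb => (hBm b hb).1, hB⟩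
    · intro a ha x hx
      have hai := (hAm a ha).2.1
      rcases List.mem_cons.mp hx with rfl | hxb
      · exact hai
      · have := (hBm x hxb).1
        omega
  · intro j hj
    rcases List.mem_append.mp hj with hja | hjx
    · exact ⟨(hAm j hja).2.2.1, (hAm j hja).2.2.2⟩
    · rcases List.mem_cons.mp hjx with rfl | hjb
      · exact ⟨by omega, hin⟩
      · exact ⟨(hBm j hjb).2.2.1, (hBm j hjb).2.2.2⟩
  · exact List.mem_append_right _ (List.mem_cons_self)
  · intro j hj
    rcases List.mem_append.mp hj with hja | hjx
    · have := hAm j hja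
      omega
    · rcases List.mem_cons.mp hjx with rfl | hjb
      · exact ⟨hℓi, hir⟩
      · have := hBm j hjb
        omega
  · rw [hseq, hct, hCA, hCB, hPd.1]
  · rw [hseq, hmv]

end Aux5
section Aux6

lemma interval_ssubset_cases {ℓ' r' ℓ r : ℕ} (h : IntervalSsubset (ℓ', r') (ℓ, r)) :
    ℓ ≤ ℓ' ∧ r' ≤ r ∧ (ℓ ≠ ℓ' ∨ r' ≠ r) := by
  obtain ⟨h1, h2, h3⟩ := h
  refine ⟨h1, h2, ?_⟩
  by_contra hc
  push_neg at hc
  exact h3 (by simp [Prod.ext_iff]; omega)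

lemma exists_min_of_fixed {T P : List ℤ} {v i : ℕ} :
    ∀ N ℓ r, r - ℓ ≤ N → IsFixedInterval T P v i ℓ r →
    ∃ ℓ' r', IsMinFixedInterval T P v i ℓ' r' ∧ ℓ ≤ ℓ' ∧ r' ≤ r := by
  intro N
  induction N with
  | zero =>
    intro ℓ r hN h
    by_cases hm : ∃ ℓ' r', IsFixedInterval T P v i ℓ' r' ∧ IntervalSsubset (ℓ', r') (ℓ, r)
    · obtain ⟨ℓ', r', hf', hss⟩ := hm
      obtain ⟨hb1, hb2, _, _, _, _⟩ := fixed_bounds hf'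
      obtain ⟨hc1, hc2, hc3⟩ := interval_ssubset_cases hss
      obtain ⟨hd1, hd2, _, _, _, _⟩ := fixed_bounds h
      omega
    · exact ⟨ℓ, r, ⟨h, hm⟩, le_refl _, le_refl _⟩
  | succ n ih =>
    intro ℓ r hN h
    by_cases hm : ∃ ℓ' r', IsFixedInterval T P v i ℓ' r' ∧ IntervalSsubset (ℓ', r') (ℓ, r)
    · obtain ⟨ℓ', r', hf', hss⟩ := hm
      obtain ⟨hb1, hb2, _, _, _, _⟩ := fixed_bounds hf'
      obtain ⟨hc1, hc2, hc3⟩ := interval_ssubset_cases hss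
      obtain ⟨hd1, hd2, _, _, _, _⟩ := fixed_bounds h
      obtain ⟨ℓ'', r'', hmin, h1, h2⟩ := ih ℓ' r' (by omega) hf'
      exact ⟨ℓ'', r'', hmin, by omega, by omega⟩
    · exact ⟨ℓ, r, ⟨h, hm⟩, le_refl _, le_refl _⟩

lemma min_unique {T P : List ℤ} (hT : T.Nodup) (hP : P.Nodup) {v : ℕ}
    (hv1 : 1 ≤ v) (hv2 : v ≤ P.length) {i ℓ₁ r₁ ℓ₂ r₂ : ℕ}
    (h1 : IsMinFixedInterval T P v i ℓ₁ r₁) (h2 : IsMinFixedInterval T P v i ℓ₂ r₂) :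
    ℓ₁ = ℓ₂ ∧ r₁ = r₂ := by
  obtain ⟨A₁, B₁, hA₁s, hB₁s, hA₁m, hB₁m, hA₁l, hB₁l, hCA₁, hCB₁, hlt₁⟩ :=
    fixed_decomp hT hP hv1 hv2 h1.1
  obtain ⟨A₂, B₂, hA₂s, hB₂s, hA₂m, hB₂m, hA₂l, hB₂l, hCA₂, hCB₂, hlt₂⟩ :=
    fixed_decomp hT hP hv1 hv2 h2.1
  obtain ⟨he1, he2, _, he4, he5, he6⟩ := fixed_bounds h1.1
  obtain ⟨hf1, hf2, _, hf4, hf5, hf6⟩ := fixed_bounds h2.1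
  have f12 : IsFixedInterval T P v i ℓ₁ r₂ := by
    refine fixed_glue hP hv1 hv2 hA₁s hB₂s hA₁m ?_ hA₁l hB₂l hCA₁ hCB₂ ?_ he1 hf2 he5 hf6 he4
    · exact hB₂m
    · intro j hj
      rcases List.mem_append.mp hj with hja | hjb
      · exact hlt₁ j (List.mem_append_left _ hja)
      · exact hlt₂ j (List.mem_append_right _ hjb)
  have f21 : IsFixedInterval T P v i ℓ₂ r₁ := by
    refine fixed_glue hP hv1 hv2 hA₂s hB₁s hA₂m ?_ hA₂l hB₁l hCA₂ hCB₁ ?_ hf1 he2 hf5 he6 hf4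
    · exact hB₁m
    · intro j hj
      rcases List.mem_append.mp hj with hja | hjb
      · exact hlt₂ j (List.mem_append_left _ hja)
      · exact hlt₁ j (List.mem_append_right _ hjb)
  have hr12 : r₁ = r₂ := by
    rcases lt_trichotomy r₁ r₂ with hlt | heq | hgt
    · exfalso
      exact h2.2 ⟨ℓ₂, r₁, f21, le_refl _, by omega, by simp [Prod.ext_iff]; omega⟩
    · exact heq
    · exfalso
      exact h1.2 ⟨ℓ₁, r₂, f12, le_refl _, by omega, by simp [Prod.ext_iff]; omega⟩
  subst hr12
  refine ⟨?_, rfl⟩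
  rcases lt_trichotomy ℓ₁ ℓ₂ with hlt | heq | hgt
  · exfalso
    exact h1.2 ⟨ℓ₂, r₁, f21, by omega, le_refl _, by simp [Prod.ext_iff]; omega⟩
  · exact heq
  · exfalso
    exact h2.2 ⟨ℓ₁, r₁, f12, by omega, le_refl _, by simp [Prod.ext_iff]; omega⟩

end Aux6

open Classical in
/-- The recurrence for `R(v, i)`, the right endpoint of the minimal
fixed-interval with pivot `(v, i)`:
`R(v,i) = ∞` if `mfi(v,i) = [-∞,∞]`; `R(v,i) = i` if `mfi(v,i) ≠ [-∞,∞]` and `v` has no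
right child in `CT(P)`; and otherwise
`R(v,i) = min { R(v.R, j) : i+1 ≤ j ≤ n, T[i] < T[j], i < L(v.R, j) }`. -/
theorem R_recurrence
    (T P : List ℤ) (hT : T.Nodup) (hP : P.Nodup)
    (hm : 1 ≤ P.length) (hmn : P.length ≤ T.length)
    (v i : ℕ) (hv : 1 ≤ v ∧ v ≤ P.length) (hi : 1 ≤ i ∧ i ≤ T.length)
    :
    (¬(∃ ℓ r, IsMinFixedInterval T P v i ℓ r) → mfiR T P v i = ⊤) ∧
    ((∃ ℓ r, IsMinFixedInterval T P v i ℓ r) → rightChild P v = none →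
      mfiR T P v i = (i : WithTop ℕ)) ∧
    (∀ u, (∃ ℓ r, IsMinFixedInterval T P v i ℓ r) → rightChild P v = some u →
      mfiR T P v i =
        ((Finset.Icc (i + 1) T.length).filter
          (fun j => val T i < val T j ∧ (i : WithBot ℕ) < mfiL T P u j)).inf
          (fun j => mfiR T P u j)) := by
  obtain ⟨hv1, hv2⟩ := hv
  obtain ⟨hi1, hi2⟩ := hi
  refine ⟨?_, ?_, ?_⟩
  · intro h
    rw [mfiR, dif_neg h]
  · intro h hrc
    have hmin := h.choose_spec.choose_spec
    set ℓ₀ := h.choose with hl0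
    set r₀ := h.choose_spec.choose with hr0
    have hrev : rightEnd P v = v := rightChild_none hv2 hrc
    obtain ⟨A, B, hAs, hBs, hAm, hBm, hAl, hBl, hCA, hCB, hlt⟩ :=
      fixed_decomp hT hP hv1 hv2 hmin.1
    obtain ⟨hb1, hb2, hb3, hb4, hb5, hb6⟩ := fixed_bounds hmin.1
    have hBnil : B = [] := by
      apply List.length_eq_zero_iff.mp
      rw [hBl, hrev]
      omega
    have hfix : IsFixedInterval T P v i ℓ₀ i := by
      refine fixed_glue hP hv1 hv2 hAs hBs hAm ?_ hAl hBl hCA hCB hlt hb1 (le_refl i) hb5 hb4 hb4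
      intro b hb
      rw [hBnil] at hb
      exact absurd hb List.not_mem_nil
    have hri : r₀ = i := by
      rcases eq_or_lt_of_le hb2 with heq | hlt'
      · exact heq.symm
      · exfalso
        exact hmin.2 ⟨ℓ₀, i, hfix, le_refl _, by omega, by simp [Prod.ext_iff]; omega⟩
    rw [mfiR, dif_pos h, ← hr0, hri]
  · intro u h hrc
    have hmin := h.choose_spec.choose_spec
    set ℓ₀ := h.choose with hl0
    set r₀ := h.choose_spec.choose with hr0
    obtain ⟨huv, hure, hleu, hreu, hPsu, hulen⟩ := rightChild_spec hP hv1 hv2 hrc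
    have hu1 : 1 ≤ u := by omega
    obtain ⟨A, B, hAs, hBs, hAm, hBm, hAl, hBl, hCA, hCB, hlt⟩ :=
      fixed_decomp hT hP hv1 hv2 hmin.1
    obtain ⟨hb1, hb2, hb3, hb4, hb5, hb6⟩ := fixed_bounds hmin.1
    have hPsu_len : (Psub P u).length = rightEnd P v - v := by
      rw [(Psub_decomp hP hu1 hulen).2.2.2, hreu, hleu]
      omega
    rw [mfiR, dif_pos h, ← hr0]
    apply le_antisymm
    · apply Finset.le_inf
      intro j hj
      simp only [Finset.mem_filter, Finset.mem_Icc] at hj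
      obtain ⟨⟨hj1, hj2⟩, hvt, hml⟩ := hj
      by_cases hj_ex : ∃ ℓ r, IsMinFixedInterval T P u j ℓ r
      swap
      · rw [mfiL, dif_neg hj_ex] at hml
        exact absurd hml (by simp)
      rw [mfiL, dif_pos hj_ex] at hml
      have hmin' := hj_ex.choose_spec.choose_spec
      set ℓ' := hj_ex.choose with hlp
      set r' := hj_ex.choose_spec.choose with hrp
      have hil : i < ℓ' := by exact_mod_cast hml
      rw [mfiR, dif_pos hj_ex, ← hrp]
      obtain ⟨hg1, hg2, hg3, hg4, hg5, hg6⟩ := fixed_bounds hmin'.1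
      obtain ⟨hℓ'1, hr'n, I', ⟨hI'len, hI'sort, hI'bnd⟩, hjI', hI'lr, hCT', hmv'⟩ := hmin'.1
      have hI'ne : I' ≠ [] := List.ne_nil_of_mem hjI'
      have hSne' : seqAt T I' ≠ [] := by
        intro e
        exact hI'ne (List.map_eq_nil_iff.mp e)
      have hfix : IsFixedInterval T P v i ℓ₀ r' := by
        refine fixed_glue hP hv1 hv2 hAs hI'sort hAm ?_ hAl ?_ hCA ?_ ?_ hb1 (by omega) hb5 hr'n hb4
        · intro b hb
          obtain ⟨x1, x2⟩ := hI'lr b hb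
          obtain ⟨y1, y2⟩ := hI'bnd b hb
          exact ⟨by omega, x2, y1, y2⟩
        · rw [hI'len, hPsu_len]
        · rw [hPsu] at hCT'
          exact hCT'
        · intro x hx
          rcases List.mem_append.mp hx with hxa | hxb
          · exact hlt x (List.mem_append_left _ hxa)
          · have hxj : val T j ≤ val T x := by
              rw [hmv']
              exact minval_le hSne' (List.mem_map_of_mem hxb)
            exact lt_of_lt_of_le hvt hxj
      have hler : r₀ ≤ r' := by
        by_contra hc
        push_neg at hc
        exact hmin.2 ⟨ℓ₀, r', hfix, le_refl _, by omega, by simp [Prod.ext_iff]; omega⟩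
      exact_mod_cast hler
    · have hBne : B ≠ [] := by
        intro e
        rw [e] at hBl
        simp at hBl
        omega
      have hSBne : seqAt T B ≠ [] := by
        intro e
        exact hBne (List.map_eq_nil_iff.mp e)
      have hk2 : minidx0 (seqAt T B) < B.length := by
        have := minidx0_lt_length hSBne
        rw [length_seqAt] at this
        exact this
      set j := B[minidx0 (seqAt T B)]'hk2 with hj_def
      have hjB : j ∈ B := List.getElem_mem hk2
      obtain ⟨hjb1, hjb2, hjb3, hjb4⟩ := hBm j hjB
      have hmvj : val T j = minval (seqAt T B) := by
        have h0 := getElem_minidx0 hSBne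
        rw [← h0, hj_def]
        exact (getElem_seqAt T hk2).symm
      have hfixu : IsFixedInterval T P u j (i+1) r₀ := by
        refine ⟨by omega, hb6, B, ⟨?_, hBs, fun b hb => ⟨(hBm b hb).2.2.1, (hBm b hb).2.2.2⟩⟩,
          hjB, ?_, ?_, hmvj⟩
        · rw [hBl, hPsu_len]
        · intro b hb
          exact ⟨by have := (hBm b hb).1; omega, (hBm b hb).2.1⟩
        · rw [hPsu]
          exact hCB
      obtain ⟨ℓs, rs, hmins, hls, hrs⟩ :=
        exists_min_of_fixed (r₀ - (i+1)) (i+1) r₀ (le_refl _) hfixu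
      have hex : ∃ ℓ r, IsMinFixedInterval T P u j ℓ r := ⟨ℓs, rs, hmins⟩
      obtain ⟨heL, heR⟩ := min_unique hT hP hu1 hulen hex.choose_spec.choose_spec hmins
      have hjS : j ∈ (Finset.Icc (i + 1) T.length).filter
          (fun j => val T i < val T j ∧ (i : WithBot ℕ) < mfiL T P u j) := by
        simp only [Finset.mem_filter, Finset.mem_Icc]
        refine ⟨⟨by omega, hjb4⟩, ?_, ?_⟩
        · exact hlt j (List.mem_append_right _ hjB)
        · rw [mfiL, dif_pos hex, heL]
          exact_mod_cast (by omega : i < ℓs)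
      refine le_trans (Finset.inf_le hjS) ?_
      rw [mfiR, dif_pos hex, heR]
      exact_mod_cast hrs
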